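/- Let 𝒫 be a converting vector set from ρ to σ, let x ∈ X, and let α, ε̂ > 0. Then the vector |w⟩ := √(α/ε̂)·|ψ_{x,α,ε̂}⟩ satisfies: (i) Λ^{α,ε̂}|w⟩ = 0; (ii) Π_x|w⟩ = |t_{x−}⟩; and (iii) ‖|w⟩‖² = 1 + (α/ε̂)·w_+(𝒫, x). -/

import Mathlib

noncomputable section

open Finset

variable {q n m : ℕ} {𝓗 : Type*} [NormedAddCommGroup 𝓗] [InnerProductSpace ℂ 𝓗]

/-- `(u, v)` is a converting vector set from `ρ` to `σ` (relative to `X`):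
for all `x, y ∈ X`, `⟨ρ_x|ρ_y⟩ − ⟨σ_x|σ_y⟩ = Σ_{j : x_j ≠ y_j} ⟨u_{xj}|v_{yj}⟩`. -/
def IsCVS (X : Finset (Fin n → Fin q)) (ρ σ : (Fin n → Fin q) → 𝓗)
    (u v : (Fin n → Fin q) → Fin n → EuclideanSpace ℂ (Fin m)) : Prop :=
  ∀ x ∈ X, ∀ y ∈ X,
    (inner ℂ (ρ x) (ρ y) : ℂ) - (inner ℂ (σ x) (σ y) : ℂ) =
      ∑ j ∈ Finset.univ.filter (fun j => x j ≠ y j), (inner ℂ (u x j) (v y j) : ℂ)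

/-- witness size of a family of vectors: `Σ_j ‖u_{xj}‖²`. -/
def wSize (u : (Fin n → Fin q) → Fin n → EuclideanSpace ℂ (Fin m))
    (x : Fin n → Fin q) : ℝ :=
  ∑ j : Fin n, ‖u x j‖ ^ 2

/-- The space `(ℂ²⊗𝒣) ⊕ (ℂⁿ⊗ℂ^q⊗ℂ^m)`, realized as the `L²` direct sum of
`𝒣 ⊕ 𝒣` (the two components of `ℂ²⊗𝒣`) and `n` copies of `ℂ^{q×m}`. -/
abbrev BigSpace (𝓗 : Type*) [NormedAddCommGroup 𝓗] [InnerProductSpace ℂ 𝓗]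
    (q n m : ℕ) : Type _ :=
  WithLp 2 ((PiLp 2 fun _ : Fin 2 => 𝓗) ×
    (PiLp 2 fun _ : Fin n => EuclideanSpace ℂ (Fin q × Fin m)))

/-- build an element of `BigSpace` from its two components. -/
def mkBig (a : PiLp 2 fun _ : Fin 2 => 𝓗)
    (g : PiLp 2 fun _ : Fin n => EuclideanSpace ℂ (Fin q × Fin m)) :
    BigSpace 𝓗 q n m :=
  (WithLp.equiv 2 _).symm (a, g)

/-- `|0⟩a + |1⟩b ∈ ℂ²⊗𝒣`. -/
def mk2 (a b : 𝓗) : PiLp 2 fun _ : Fin 2 => 𝓗 :=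
  (WithLp.equiv 2 _).symm (fun i => if i = 0 then a else b)

/-- build an element of `ℂⁿ⊗ℂ^q⊗ℂ^m` from its components. -/
def mkPi (g : Fin n → EuclideanSpace ℂ (Fin q × Fin m)) :
    PiLp 2 fun _ : Fin n => EuclideanSpace ℂ (Fin q × Fin m) :=
  (WithLp.equiv 2 _).symm g

/-- the pure tensor `ν ⊗ w ∈ ℂ^q ⊗ ℂ^m`. -/
def tens (ν : EuclideanSpace ℂ (Fin q)) (w : EuclideanSpace ℂ (Fin m)) :
    EuclideanSpace ℂ (Fin q × Fin m) :=
  (WithLp.equiv 2 _).symm fun p => ν p.1 * w p.2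

/-- `|t_{x+}⟩ = (1/√2)(|0⟩|ρ_x⟩ + |1⟩|σ_x⟩)`. -/
def tPlus (ρ σ : (Fin n → Fin q) → 𝓗) (x : Fin n → Fin q) :
    BigSpace 𝓗 q n m :=
  mkBig (mk2 ((((Real.sqrt 2 : ℝ) : ℂ))⁻¹ • ρ x) ((((Real.sqrt 2 : ℝ) : ℂ))⁻¹ • σ x)) 0

/-- `|t_{x−}⟩ = (1/√2)(|0⟩|ρ_x⟩ − |1⟩|σ_x⟩)`. -/
def tMinus (ρ σ : (Fin n → Fin q) → 𝓗) (x : Fin n → Fin q) :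
    BigSpace 𝓗 q n m :=
  mkBig (mk2 ((((Real.sqrt 2 : ℝ) : ℂ))⁻¹ • ρ x) (-((((Real.sqrt 2 : ℝ) : ℂ))⁻¹ • σ x))) 0

/-- `|ψ_{x,α,ε̂}⟩ = √(ε̂/α)|t_{x−}⟩ − Σ_j |j⟩|μ_{x_j}⟩|u_{xj}⟩`. -/
def psi (ρ σ : (Fin n → Fin q) → 𝓗)
    (u : (Fin n → Fin q) → Fin n → EuclideanSpace ℂ (Fin m))
    (μ : Fin q → EuclideanSpace ℂ (Fin q)) (α εh : ℝ) (x : Fin n → Fin q) :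
    BigSpace 𝓗 q n m :=
  (((Real.sqrt (εh / α) : ℝ) : ℂ)) • tMinus ρ σ x -
    mkBig 0 (mkPi fun j => tens (μ (x j)) (u x j))

/-- `⟨ν| ⊗ I : ℂ^q ⊗ ℂ^m → ℂ^m`, contraction of the first tensor factor with `ν`. -/
def contractL (ν : EuclideanSpace ℂ (Fin q)) :
    EuclideanSpace ℂ (Fin q × Fin m) →ₗ[ℂ] EuclideanSpace ℂ (Fin m) :=
  (WithLp.linearEquiv 2 ℂ (Fin m → ℂ)).symm.toLinearMap ∘ₗ
    LinearMap.pi fun k => (innerSL ℂ (tens ν (EuclideanSpace.single k 1))).toLinearMap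

/-- `|ν⟩ ⊗ I : ℂ^m → ℂ^q ⊗ ℂ^m`, tensoring with `ν`. -/
def tensL (ν : EuclideanSpace ℂ (Fin q)) :
    EuclideanSpace ℂ (Fin m) →ₗ[ℂ] EuclideanSpace ℂ (Fin q × Fin m) :=
  (WithLp.linearEquiv 2 ℂ (Fin q × Fin m → ℂ)).symm.toLinearMap ∘ₗ
    LinearMap.pi fun p : Fin q × Fin m =>
      ν p.1 • (LinearMap.proj p.2 ∘ₗ (WithLp.linearEquiv 2 ℂ (Fin m → ℂ)).toLinearMap)

/-- `|ν⟩⟨ν| ⊗ I` on `ℂ^q ⊗ ℂ^m`. -/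
def projMu (ν : EuclideanSpace ℂ (Fin q)) :
    EuclideanSpace ℂ (Fin q × Fin m) →ₗ[ℂ] EuclideanSpace ℂ (Fin q × Fin m) :=
  tensL ν ∘ₗ contractL ν

/-- `Σ_j |j⟩⟨j| ⊗ |μ_{x_j}⟩⟨μ_{x_j}| ⊗ I` on `ℂⁿ⊗ℂ^q⊗ℂ^m`. -/
def sumProjMu (μ : Fin q → EuclideanSpace ℂ (Fin q)) (x : Fin n → Fin q) :
    (PiLp 2 fun _ : Fin n => EuclideanSpace ℂ (Fin q × Fin m)) →ₗ[ℂ]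
      (PiLp 2 fun _ : Fin n => EuclideanSpace ℂ (Fin q × Fin m)) :=
  (WithLp.linearEquiv 2 ℂ (∀ _ : Fin n, EuclideanSpace ℂ (Fin q × Fin m))).symm.toLinearMap ∘ₗ
    (LinearMap.pi fun j => projMu (μ (x j)) ∘ₗ LinearMap.proj j) ∘ₗ
    (WithLp.linearEquiv 2 ℂ (∀ _ : Fin n, EuclideanSpace ℂ (Fin q × Fin m))).toLinearMap

/-- the canonical linear identification of `BigSpace` with the product. -/
def bigEquiv (𝓗 : Type*) [NormedAddCommGroup 𝓗] [InnerProductSpace ℂ 𝓗] (q n m : ℕ) :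
    BigSpace 𝓗 q n m ≃ₗ[ℂ]
      (PiLp 2 fun _ : Fin 2 => 𝓗) ×
        (PiLp 2 fun _ : Fin n => EuclideanSpace ℂ (Fin q × Fin m)) :=
  WithLp.linearEquiv 2 ℂ _

/-- `Π_x = I − Σ_j |j⟩⟨j| ⊗ |μ_{x_j}⟩⟨μ_{x_j}| ⊗ I` on `(ℂ²⊗𝒣) ⊕ (ℂⁿ⊗ℂ^q⊗ℂ^m)`. -/
def PiX (μ : Fin q → EuclideanSpace ℂ (Fin q)) (x : Fin n → Fin q) :
    BigSpace 𝓗 q n m →ₗ[ℂ] BigSpace 𝓗 q n m :=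
  LinearMap.id -
    (bigEquiv 𝓗 q n m).symm.toLinearMap ∘ₗ
      (LinearMap.prodMap 0 (sumProjMu μ x)) ∘ₗ (bigEquiv 𝓗 q n m).toLinearMap

/-- orthogonal projection onto a submodule, as an endomorphism. -/
def projL {K : Type*} [NormedAddCommGroup K] [InnerProductSpace ℂ K] [FiniteDimensional ℂ K]
    (S : Submodule ℂ K) : K →ₗ[ℂ] K :=
  S.subtype ∘ₗ (S.orthogonalProjection).toLinearMap

/-- `Λ^{α,ε̂}`: the orthogonal projection onto the orthogonal complement of
`span{|ψ_{x,α,ε̂}⟩ : x ∈ X}`. -/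
def LambdaCVS [FiniteDimensional ℂ 𝓗] (X : Finset (Fin n → Fin q))
    (ρ σ : (Fin n → Fin q) → 𝓗)
    (u : (Fin n → Fin q) → Fin n → EuclideanSpace ℂ (Fin m))
    (μ : Fin q → EuclideanSpace ℂ (Fin q)) (α εh : ℝ) :
    BigSpace 𝓗 q n m →ₗ[ℂ] BigSpace 𝓗 q n m :=
  projL ((Submodule.span ℂ ((fun x => psi ρ σ u μ α εh x) '' (X : Set (Fin n → Fin q))))ᗮ)

/-- `U(𝒫, x, α, ε̂) = (2Π_x − I)(2Λ^{α,ε̂} − I)`. -/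
def Ucvs [FiniteDimensional ℂ 𝓗] (X : Finset (Fin n → Fin q))
    (ρ σ : (Fin n → Fin q) → 𝓗)
    (u : (Fin n → Fin q) → Fin n → EuclideanSpace ℂ (Fin m))
    (μ : Fin q → EuclideanSpace ℂ (Fin q)) (α εh : ℝ) (x : Fin n → Fin q) :
    BigSpace 𝓗 q n m →ₗ[ℂ] BigSpace 𝓗 q n m :=
  (2 • PiX μ x - LinearMap.id) ∘ₗ (2 • LambdaCVS X ρ σ u μ α εh - LinearMap.id)

/-- `phaseSpace U Θ` is the span of the eigenvectors of `U` with eigenvalue `e^{iθ}`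
for `|θ| ≤ Θ`; the orthogonal projection onto it is `P_Θ(U)`. -/
def phaseSpace {K : Type*} [NormedAddCommGroup K] [InnerProductSpace ℂ K]
    (U : K →ₗ[ℂ] K) (Θ : ℝ) : Submodule ℂ K :=
  ⨆ θ : Set.Icc (-Θ) Θ, Module.End.eigenspace U (Complex.exp (Complex.I * (θ : ℝ)))

section Helpers

lemma tens_inner (ν ν' : EuclideanSpace ℂ (Fin q)) (w w' : EuclideanSpace ℂ (Fin m)) :
    (inner ℂ (tens ν w) (tens ν' w') : ℂ) = (inner ℂ ν ν' : ℂ) * (inner ℂ w w' : ℂ) := by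
  simp only [tens, PiLp.inner_apply, RCLike.inner_apply, WithLp.equiv_symm_apply, PiLp.toLp_apply]
  rw [Finset.sum_mul_sum, ← Finset.sum_product', ← Finset.univ_product_univ]
  apply Finset.sum_congr rfl
  intro p _
  simp [map_mul]
  ring

lemma norm_tens (ν : EuclideanSpace ℂ (Fin q)) (w : EuclideanSpace ℂ (Fin m)) :
    ‖tens ν w‖ = ‖ν‖ * ‖w‖ := by
  have h := tens_inner ν ν w w
  rw [inner_self_eq_norm_sq_to_K, inner_self_eq_norm_sq_to_K, inner_self_eq_norm_sq_to_K] at h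
  have h3 : ‖tens ν w‖ ^ 2 = ‖ν‖ ^ 2 * ‖w‖ ^ 2 := by exact_mod_cast h
  nlinarith [norm_nonneg (tens ν w), norm_nonneg ν, norm_nonneg w,
    mul_nonneg (norm_nonneg ν) (norm_nonneg w)]

lemma projMu_fix (ν : EuclideanSpace ℂ (Fin q)) (hν : ‖ν‖ = 1)
    (w : EuclideanSpace ℂ (Fin m)) : projMu ν (tens ν w) = tens ν w := by
  have hc : contractL ν (tens ν w) = w := by
    ext k
    simp only [contractL, LinearMap.comp_apply, LinearEquiv.coe_toLinearMap,
      WithLp.coe_symm_linearEquiv, WithLp.ofLp_toLp, WithLp.equiv_symm_apply, PiLp.toLp_apply, LinearMap.pi_apply,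
      ContinuousLinearMap.coe_coe, innerSL_apply_apply]
    rw [tens_inner, inner_self_eq_norm_sq_to_K, hν, EuclideanSpace.inner_single_left]
    simp
  simp only [projMu, LinearMap.comp_apply, hc]
  ext p
  simp only [tensL, tens, LinearMap.comp_apply, LinearEquiv.coe_toLinearMap,
    WithLp.coe_symm_linearEquiv, WithLp.ofLp_toLp, WithLp.coe_linearEquiv, WithLp.equiv_symm_apply, WithLp.equiv_symm_apply, PiLp.toLp_apply,
    LinearMap.pi_apply, LinearMap.smul_apply, LinearMap.proj_apply, smul_eq_mul]

end Helpers

/-- `|w⟩ = √(α/ε̂)|ψ_{x,α,ε̂}⟩` satisfies `Λ^{α,ε̂}|w⟩ = 0`,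
`Π_x|w⟩ = |t_{x−}⟩`, and `‖w‖² = 1 + (α/ε̂)·w_+(𝒫,x)`. -/
theorem scaled_psi_properties (hq : 2 ≤ q) (hn : 1 ≤ n) (hm : 1 ≤ m) [FiniteDimensional ℂ 𝓗]
    (X : Finset (Fin n → Fin q)) (ρ σ : (Fin n → Fin q) → 𝓗)
    (hρ : ∀ x ∈ X, ‖ρ x‖ = 1) (hσ : ∀ x ∈ X, ‖σ x‖ = 1)
    (u v : (Fin n → Fin q) → Fin n → EuclideanSpace ℂ (Fin m))
    (hP : IsCVS X ρ σ u v)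
    (μ : Fin q → EuclideanSpace ℂ (Fin q)) (hμ : ∀ i, ‖μ i‖ = 1)
    (x : Fin n → Fin q) (hx : x ∈ X)
    (α εh : ℝ) (hα : 0 < α) (hε : 0 < εh)
    (w : BigSpace 𝓗 q n m)
    (hw : w = (((Real.sqrt (α / εh) : ℝ) : ℂ)) • psi ρ σ u μ α εh x) :
    LambdaCVS X ρ σ u μ α εh w = 0 ∧
      PiX μ x w = tMinus ρ σ x ∧
      ‖w‖ ^ 2 = 1 + (α / εh) * wSize u x := by
  have hαε : (0:ℝ) ≤ α / εh := le_of_lt (div_pos hα hε)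
  have hεα : (0:ℝ) ≤ εh / α := le_of_lt (div_pos hε hα)
  set c : ℝ := Real.sqrt (α / εh) with hc
  set s : ℝ := Real.sqrt (εh / α) with hs
  have hcs : c * s = 1 := by
    rw [hc, hs, ← Real.sqrt_mul hαε]
    rw [show α / εh * (εh / α) = 1 by field_simp]
    exact Real.sqrt_one
  refine ⟨?_, ?_, ?_⟩
  · -- Λ w = 0
    have hmem : psi ρ σ u μ α εh x ∈
        Submodule.span ℂ ((fun x => psi ρ σ u μ α εh x) '' (X : Set (Fin n → Fin q))) :=
      Submodule.subset_span ⟨x, hx, rfl⟩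
    have hmem' : w ∈ (Submodule.span ℂ
        ((fun x => psi ρ σ u μ α εh x) '' (X : Set (Fin n → Fin q))))ᗮᗮ := by
      apply Submodule.le_orthogonal_orthogonal
      rw [hw]; exact Submodule.smul_mem _ _ hmem
    simp only [LambdaCVS, projL, LinearMap.comp_apply, LinearEquiv.coe_toLinearMap,
      ContinuousLinearMap.coe_coe]
    rw [Submodule.orthogonalProjectionOnto_apply_of_mem_orthogonal hmem']
    simp
  · -- Π_x w = t_-
    have hPt : PiX (𝓗 := 𝓗) (m := m) μ x (tMinus ρ σ x) = tMinus ρ σ x := by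
      simp only [PiX, tMinus, mkBig, bigEquiv, LinearMap.sub_apply, LinearMap.id_apply,
        LinearMap.comp_apply, LinearEquiv.coe_toLinearMap, WithLp.coe_linearEquiv, WithLp.equiv_symm_apply,
        WithLp.coe_symm_linearEquiv, WithLp.ofLp_toLp, Equiv.apply_symm_apply, LinearMap.prodMap_apply,
        LinearMap.zero_apply, map_zero]
      rw [show ((0 : PiLp 2 fun _ : Fin 2 => 𝓗),
        (0 : PiLp 2 fun _ : Fin n => EuclideanSpace ℂ (Fin q × Fin m))) = 0 from rfl]
      simp
    have hPB : PiX (𝓗 := 𝓗) μ x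
        (mkBig (0 : PiLp 2 fun _ : Fin 2 => 𝓗)
          (mkPi fun j => tens (μ (x j)) (u x j))) = 0 := by
      have hsum : sumProjMu (m := m) μ x (mkPi fun j => tens (μ (x j)) (u x j)) =
          mkPi fun j => tens (μ (x j)) (u x j) := by
        ext j
        simp only [sumProjMu, mkPi, LinearMap.comp_apply, LinearEquiv.coe_toLinearMap,
          WithLp.coe_linearEquiv, WithLp.equiv_symm_apply, WithLp.coe_symm_linearEquiv, WithLp.ofLp_toLp, Equiv.apply_symm_apply,
          LinearMap.pi_apply, LinearMap.proj_apply, WithLp.equiv_symm_apply, PiLp.toLp_apply]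
        rw [projMu_fix _ (hμ (x j))]
      simp only [PiX, mkBig, bigEquiv, LinearMap.sub_apply, LinearMap.id_apply,
        LinearMap.comp_apply, LinearEquiv.coe_toLinearMap, WithLp.coe_linearEquiv, WithLp.equiv_symm_apply,
        WithLp.coe_symm_linearEquiv, WithLp.ofLp_toLp, Equiv.apply_symm_apply, LinearMap.prodMap_apply,
        LinearMap.zero_apply, hsum]
      exact sub_self _
    have hdecomp : w = tMinus ρ σ x - (c : ℂ) •
        mkBig (0 : PiLp 2 fun _ : Fin 2 => 𝓗) (mkPi fun j => tens (μ (x j)) (u x j)) := by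
      rw [hw, psi, smul_sub, smul_smul, ← Complex.ofReal_mul, hcs, Complex.ofReal_one, one_smul]
    rw [hdecomp, map_sub, map_smul, hPt, hPB, smul_zero, sub_zero]
  · -- norm
    have hnw : ‖w‖ = c * ‖psi ρ σ u μ α εh x‖ := by
      rw [hw, norm_smul, Complex.norm_real, Real.norm_eq_abs,
        abs_of_nonneg (Real.sqrt_nonneg _)]
    have hpsi_eq : psi ρ σ u μ α εh x = mkBig
        ((s : ℂ) • mk2 ((((Real.sqrt 2 : ℝ) : ℂ))⁻¹ • ρ x)
          (-((((Real.sqrt 2 : ℝ) : ℂ))⁻¹ • σ x)))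
        (-(mkPi fun j => tens (μ (x j)) (u x j))) := by
      simp only [psi, tMinus, mkBig, WithLp.equiv_symm_apply, ← WithLp.toLp_smul, ← WithLp.toLp_sub]
      congr 1
      rw [Prod.smul_mk, Prod.mk_sub_mk, smul_zero, zero_sub, sub_zero]
    have hna : ‖mk2 ((((Real.sqrt 2 : ℝ) : ℂ))⁻¹ • ρ x)
        (-((((Real.sqrt 2 : ℝ) : ℂ))⁻¹ • σ x))‖ ^ 2 = 1 := by
      have h0 : (mk2 ((((Real.sqrt 2 : ℝ) : ℂ))⁻¹ • ρ x)
          (-((((Real.sqrt 2 : ℝ) : ℂ))⁻¹ • σ x))) 0 = (((Real.sqrt 2 : ℝ) : ℂ))⁻¹ • ρ x := rfl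
      have h1 : (mk2 ((((Real.sqrt 2 : ℝ) : ℂ))⁻¹ • ρ x)
          (-((((Real.sqrt 2 : ℝ) : ℂ))⁻¹ • σ x))) 1 = -((((Real.sqrt 2 : ℝ) : ℂ))⁻¹ • σ x) := rfl
      rw [PiLp.norm_sq_eq_of_L2]
      rw [Fin.sum_univ_two, h0, h1]
      simp only [norm_neg, norm_smul, hρ x hx, hσ x hx, mul_one, norm_inv,
        Complex.norm_real, Real.norm_eq_abs, abs_of_nonneg (Real.sqrt_nonneg 2), inv_pow,
        Real.sq_sqrt (by norm_num : (0:ℝ) ≤ 2)]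
      norm_num
    have hnB : ‖mkPi (q := q) fun j => tens (μ (x j)) (u x j)‖ ^ 2 = wSize u x := by
      rw [PiLp.norm_sq_eq_of_L2, wSize]
      apply Finset.sum_congr rfl
      intro j _
      simp only [mkPi, WithLp.equiv_symm_apply, PiLp.toLp_apply]
      rw [norm_tens, hμ (x j), one_mul]
    have hnpsi : ‖psi ρ σ u μ α εh x‖ ^ 2 = s ^ 2 + wSize u x := by
      rw [hpsi_eq]
      rw [show (mkBig ((s : ℂ) • mk2 ((((Real.sqrt 2 : ℝ) : ℂ))⁻¹ • ρ x)
          (-((((Real.sqrt 2 : ℝ) : ℂ))⁻¹ • σ x)))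
          (-(mkPi (q := q) fun j => tens (μ (x j)) (u x j)))) =
        (WithLp.equiv 2 _).symm ((s : ℂ) • mk2 ((((Real.sqrt 2 : ℝ) : ℂ))⁻¹ • ρ x)
          (-((((Real.sqrt 2 : ℝ) : ℂ))⁻¹ • σ x)),
          -(mkPi fun j => tens (μ (x j)) (u x j))) from rfl]
      rw [WithLp.prod_norm_sq_eq_of_L2]
      simp only [WithLp.equiv_symm_apply, WithLp.toLp_fst, WithLp.toLp_snd, norm_neg]
      rw [norm_smul, mul_pow, hnB, hna, mul_one, Complex.norm_real, Real.norm_eq_abs,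
        sq_abs]
    have hc2 : c ^ 2 = α / εh := Real.sq_sqrt hαε
    have hs2 : s ^ 2 = εh / α := Real.sq_sqrt hεα
    rw [hnw, mul_pow, hnpsi, hc2, hs2, mul_add]
    rw [show α / εh * (εh / α) = 1 by field_simp]
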